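/- Let X be a path-connected metric (or more generally normal) topological space and suppose X × X admits an open cover U₁,…,U_k such that each U_i admits a continuous local section s_i : U_i → PX of the endpoint map π. Then there exists a continuous k-valued random motion planning algorithm in X, i.e., continuous functions p₁,…,p_k : X × X → [0,1] with p₁ + … + p_k = 1 and (possibly discontinuous) maps S_i : X × X → PX with π∘S_i = id such that each S_i is continuous on the set {p_i > 0}, and the closure of {p_i > 0} is contained in U_i. -/

import Mathlib

/-- If `X` is a path-connected metric space and `X × X` admits a finite open cover
`U₁,…,U_k` over each of which the endpoint map `π : C([0,1],X) → X × X` has a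
continuous local section, then there is a continuous `k`-valued random motion
planning algorithm: continuous `p_i : X × X → [0,1]` summing to `1`, and sections
`S_i : X × X → PX` of `π`, each continuous on `{p_i > 0}`, with
`closure {p_i > 0} ⊆ U_i`. -/
theorem exists_random_motion_planning_algorithm
    (X : Type*) [MetricSpace X] [PathConnectedSpace X]
    (n : ℕ) (U : Fin n → Set (X × X))
    (hopen : ∀ i, IsOpen (U i)) (hcover : (⋃ i, U i) = Set.univ)
    (hsec : ∀ i, ∃ s : U i → C(unitInterval, X), Continuous s ∧
      ∀ q : U i, (s q) 0 = (q : X × X).1 ∧ (s q) 1 = (q : X × X).2) :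
    ∃ (p : Fin n → (X × X) → ℝ) (S : Fin n → (X × X) → C(unitInterval, X)),
      (∀ i, Continuous (p i)) ∧
      (∀ i x, p i x ∈ Set.Icc (0 : ℝ) 1) ∧
      (∀ x, ∑ i, p i x = 1) ∧
      (∀ i x, (S i x) 0 = x.1 ∧ (S i x) 1 = x.2) ∧
      (∀ i, ContinuousOn (S i) {x | 0 < p i x}) ∧
      (∀ i, closure {x | 0 < p i x} ⊆ U i) := by
  classical
  choose s hs hends using hsec
  obtain ⟨f, hf⟩ := PartitionOfUnity.exists_isSubordinate isClosed_univ U hopen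
    (hcover ▸ subset_rfl)
  set p : Fin n → (X × X) → ℝ := fun i x => f i x with hp
  set S : Fin n → (X × X) → C(unitInterval, X) := fun i x =>
    if h : x ∈ U i then s i ⟨x, h⟩
    else (PathConnectedSpace.somePath x.1 x.2).toContinuousMap with hS
  have hsupp : ∀ i, {x | 0 < p i x} = Function.support (f i) := by
    intro i
    ext x
    simp only [Set.mem_setOf_eq, Function.mem_support]
    constructor
    · intro h; exact ne_of_gt h
    · intro h; exact lt_of_le_of_ne (f.nonneg i x) (Ne.symm h)
  have hcl : ∀ i, closure {x | 0 < p i x} ⊆ U i := fun i => (hsupp i) ▸ hf i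
  refine ⟨p, S, fun i => (f i).continuous, fun i x => ⟨f.nonneg i x, f.le_one i x⟩,
    fun x => ?_, fun i x => ?_, fun i => ?_, hcl⟩
  · have := f.sum_eq_one (Set.mem_univ x)
    rwa [finsum_eq_sum_of_fintype] at this
  · by_cases h : x ∈ U i
    · simpa [hS, h] using hends i ⟨x, h⟩
    · simp [hS, h]
  · have hsub : {x | 0 < p i x} ⊆ U i := fun x hx => hcl i (subset_closure hx)
    have : ContinuousOn (S i) (U i) := by
      rw [continuousOn_iff_continuous_restrict]
      have : (U i).domRestrict (S i) = s i := by
        funext q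
        simp [hS, q.2, Set.domRestrict_apply]
      rw [this]
      exact hs i
    exact this.mono hsub
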